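/- Let U(x̄) = V(x) + ζ·φ(τ)·W²(k, ē) where φ solves the Riccati ODE φ' = −2Lφ − ζ(φ² + 1) with φ(0) = λ̄^{-1}, L ≥ 0, ζ > 0, λ̄ ∈ (0,1). Then φ is strictly decreasing on its interval of existence, and φ(τ) ≥ λ̄ for all τ ∈ [0, T], where T is the MATI bound given by T = (1/(Lη))·arctan(η(1−λ̄)/(2(λ̄/(1+λ̄))(ζ/L − 1) + 1 + λ̄)) when ζ > L, T = (1/L)·(1−λ̄)/(1+λ̄) when ζ = L, and T = (1/(Lη))·arctanh(η(1−λ̄)/(2(λ̄/(1+λ̄))(ζ/L − 1) + 1 + λ̄)) when ζ < L, with η = sqrt(|(ζ/L)² − 1|). -/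

import Mathlib

section MATIHelpers
open Real Set

lemma mati_key (L ζ lbar T : ℝ) (hL : 0 ≤ L) (hζ : 0 < ζ)
    (hl0 : 0 < lbar) (hl1 : lbar < 1)
    (F : ℝ → ℝ)
    (hF : ∀ x, lbar ≤ x → HasDerivAt F (1 / (2*L*x + ζ*(x^2+1))) x)
    (hFT : F lbar⁻¹ - F lbar = T)
    (φ : ℝ → ℝ) (hφ0 : φ 0 = lbar⁻¹)
    (hode : ∀ t ∈ Set.Icc 0 T, HasDerivAt φ (-2 * L * φ t - ζ * ((φ t) ^ 2 + 1)) t) :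
    ∀ τ ∈ Set.Icc 0 T, lbar ≤ φ τ := by
  have hcont : ContinuousOn φ (Icc 0 T) := fun t ht =>
    (hode t ht).continuousAt.continuousWithinAt
  have h0lt : lbar < φ 0 := by
    rw [hφ0]; exact lt_trans hl1 ((one_lt_inv₀ hl0).mpr hl1)
  by_contra h
  push_neg at h
  obtain ⟨τ, hτ, hτlt⟩ := h
  have hτT : τ ≤ T := hτ.2
  set A : Set ℝ := Icc 0 τ ∩ φ ⁻¹' (Iic lbar) with hA
  have hA_closed : IsClosed A :=
    (hcont.mono (Icc_subset_Icc_right hτT)).preimage_isClosed_of_isClosed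
      isClosed_Icc isClosed_Iic
  have hτA : τ ∈ A := ⟨⟨hτ.1, le_refl τ⟩, hτlt.le⟩
  have hbdd : BddBelow A := ⟨0, fun x hx => hx.1.1⟩
  set t₀ := sInf A with ht₀def
  have ht₀A : t₀ ∈ A := hA_closed.csInf_mem ⟨τ, hτA⟩ hbdd
  have ht₀mem : t₀ ∈ Icc 0 τ := ht₀A.1
  have ht₀le : φ t₀ ≤ lbar := ht₀A.2
  have ht₀pos : 0 < t₀ := by
    rcases eq_or_lt_of_le ht₀mem.1 with h0 | h0
    · exact absurd ht₀le (by rw [← h0]; exact not_le.mpr h0lt)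
    · exact h0
  have hgt : ∀ s, 0 ≤ s → s < t₀ → lbar < φ s := by
    intro s hs hst
    by_contra hle
    push_neg at hle
    have hsA : s ∈ A := ⟨⟨hs, le_trans hst.le ht₀mem.2⟩, hle⟩
    exact absurd (csInf_le hbdd hsA) (not_le.mpr hst)
  have ht₀T : t₀ ≤ T := le_trans ht₀mem.2 hτT
  have heq : φ t₀ = lbar := by
    refine le_antisymm ht₀le ?_
    have hcw : ContinuousWithinAt φ (Ico 0 t₀) t₀ :=
      (hcont t₀ ⟨ht₀mem.1, ht₀T⟩).mono (fun x hx => ⟨hx.1, le_trans hx.2.le ht₀T⟩)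
    haveI := right_nhdsWithin_Ico_neBot ht₀pos
    exact ge_of_tendsto hcw (eventually_nhdsWithin_of_forall
      (fun s (hs : s ∈ Ico 0 t₀) => (hgt s hs.1 hs.2).le))
  have hge : ∀ s ∈ Icc 0 t₀, lbar ≤ φ s := by
    intro s hs
    rcases eq_or_lt_of_le hs.2 with h | h
    · rw [h, heq]
    · exact (hgt s hs.1 h).le
  have hDpos : ∀ x, lbar ≤ x → 0 < 2*L*x + ζ*(x^2+1) := by
    intro x hx
    have hx0 : 0 < x := lt_of_lt_of_le hl0 hx
    nlinarith
  set g : ℝ → ℝ := fun s => F (φ s) + s with hg_def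
  have hg : ∀ s ∈ Icc 0 t₀, HasDerivAt g 0 s := by
    intro s hs
    have hs' : s ∈ Icc 0 T := ⟨hs.1, le_trans hs.2 ht₀T⟩
    have hφs : lbar ≤ φ s := hge s hs
    have hD := hDpos (φ s) hφs
    have h1 := (hF (φ s) hφs).comp s (hode s hs')
    have h2 := h1.add (hasDerivAt_id s)
    have h3 : 1 / (2*L*φ s + ζ*((φ s)^2+1)) * (-2 * L * φ s - ζ * ((φ s) ^ 2 + 1)) + 1 = 0 := by
      field_simp
      ring
    rw [h3] at h2
    exact h2
  have hconst : g t₀ = g 0 :=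
    constant_of_has_deriv_right_zero
      (fun s hs => (hg s hs).continuousAt.continuousWithinAt)
      (fun s hs => (hg s (Ico_subset_Icc_self hs)).hasDerivWithinAt)
      t₀ (right_mem_Icc.mpr ht₀pos.le)
  have ht₀eq : t₀ = T := by
    simp only [hg_def, heq, hφ0] at hconst
    linarith
  have : τ = t₀ := le_antisymm (ht₀eq ▸ hτT) ht₀mem.2
  rw [this, heq] at hτlt
  exact absurd hτlt (lt_irrefl lbar)

lemma case_eq (L lbar : ℝ) (hL : 0 < L) (hl0 : 0 < lbar) (hl1 : lbar < 1) :
    ∃ F : ℝ → ℝ, (∀ x, lbar ≤ x → HasDerivAt F (1 / (2*L*x + L*(x^2+1))) x) ∧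
      F lbar⁻¹ - F lbar = (1 / L) * ((1 - lbar) / (1 + lbar)) := by
  refine ⟨fun x => -(L*(x+1))⁻¹, ?_, ?_⟩
  · intro x hx
    have hx0 : 0 < x := lt_of_lt_of_le hl0 hx
    have hne : L*(x+1) ≠ 0 := by positivity
    have h1 : HasDerivAt (fun x : ℝ => L*(x+1)) L x := by
      simpa using ((hasDerivAt_id x).add_const 1).const_mul L
    have h2 := (h1.inv hne).neg
    refine h2.congr_deriv (Eq.symm ?_)
    have hD : (0:ℝ) < 2*L*x + L*(x^2+1) := by nlinarith
    field_simp
    ring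
  · have h1 : (0:ℝ) < 1 + lbar := by linarith
    field_simp
    ring

set_option maxHeartbeats 1000000 in
lemma case_gt (L ζ lbar : ℝ) (hL : 0 < L) (hζL : L < ζ) (hl0 : 0 < lbar) (hl1 : lbar < 1) :
    ∃ F : ℝ → ℝ, (∀ x, lbar ≤ x → HasDerivAt F (1 / (2*L*x + ζ*(x^2+1))) x) ∧
      F lbar⁻¹ - F lbar = (1 / (L * Real.sqrt |(ζ / L) ^ 2 - 1|)) *
        Real.arctan (Real.sqrt |(ζ / L) ^ 2 - 1| * (1 - lbar) /
          (2 * (lbar / (1 + lbar)) * (ζ / L - 1) + 1 + lbar)) := by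
  set m := Real.sqrt (ζ^2 - L^2) with hm_def
  have hm2 : m^2 = ζ^2 - L^2 := Real.sq_sqrt (by nlinarith)
  have hmpos : 0 < m := Real.sqrt_pos.mpr (by nlinarith)
  have hsq : Real.sqrt |(ζ/L)^2 - 1| = m / L := by
    have h1 : |(ζ/L)^2 - 1| = (ζ^2 - L^2) / L^2 := by
      rw [abs_of_pos]
      · field_simp
      · have : (1:ℝ) < ζ / L := (one_lt_div hL).mpr hζL
        nlinarith
    rw [h1, Real.sqrt_div (by nlinarith) (L^2), Real.sqrt_sq hL.le]
  clear_value m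
  clear hm_def
  refine ⟨fun x => (1/m) * Real.arctan ((ζ*x+L)/m), ?_, ?_⟩
  · intro x hx
    have hx0 : 0 < x := lt_of_lt_of_le hl0 hx
    have hD : 0 < 2*L*x + ζ*(x^2+1) := by nlinarith
    have hi : HasDerivAt (fun x : ℝ => (ζ*x+L)/m) (ζ/m) x := by
      simpa using (((hasDerivAt_id x).const_mul ζ).add_const L).div_const m
    have h2 := ((Real.hasDerivAt_arctan ((ζ*x+L)/m)).comp x hi).const_mul (1/m)
    refine h2.congr_deriv (Eq.symm ?_)
    have hq : (0:ℝ) < 1 + ((ζ*x+L)/m)^2 := by positivity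
    field_simp
    linear_combination hm2
  · simp only
    rw [hsq]
    have h1l : (0:ℝ) < 1 + lbar := by linarith
    have hinv : (0:ℝ) < lbar⁻¹ := inv_pos.mpr hl0
    have hE : (0:ℝ) < 2*ζ*lbar + L*(1+lbar^2) := by nlinarith
    have hD0 : (0:ℝ) < 2 * (lbar / (1 + lbar)) * (ζ / L - 1) + 1 + lbar := by
      have h3 : (0:ℝ) < ζ/L - 1 := sub_pos.mpr ((one_lt_div hL).mpr hζL)
      have h4 : (0:ℝ) < lbar / (1 + lbar) := div_pos hl0 h1l
      nlinarith
    have hLm : 1 / (L * (m / L)) = 1/m := by field_simp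
    rw [hLm]
    have hy : m / L * (1 - lbar) / (2 * (lbar / (1 + lbar)) * (ζ / L - 1) + 1 + lbar)
        = m*(1-lbar^2) / (2*ζ*lbar + L*(1+lbar^2)) := by
      rw [div_eq_div_iff hD0.ne' hE.ne']
      field_simp
      ring
    rw [hy]
    have h : ((ζ*lbar⁻¹+L)/m) * (-((ζ*lbar+L)/m)) < 1 := by
      have h2 : 0 < ((ζ*lbar⁻¹+L)/m) * ((ζ*lbar+L)/m) :=
        mul_pos (div_pos (by nlinarith) hmpos) (div_pos (by nlinarith) hmpos)
      nlinarith
    have h2 := Real.arctan_add (x := (ζ*lbar⁻¹+L)/m) (y := -((ζ*lbar+L)/m)) h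
    have hargeq : ((ζ*lbar⁻¹+L)/m + -((ζ*lbar+L)/m)) / (1 - ((ζ*lbar⁻¹+L)/m) * -((ζ*lbar+L)/m))
        = m*(1-lbar^2) / (2*ζ*lbar + L*(1+lbar^2)) := by
      have h1 : (0:ℝ) < 1 - ((ζ*lbar⁻¹+L)/m) * -((ζ*lbar+L)/m) := by
        have h2' : 0 < ((ζ*lbar⁻¹+L)/m) * ((ζ*lbar+L)/m) :=
          mul_pos (div_pos (by nlinarith) hmpos) (div_pos (by nlinarith) hmpos)
        nlinarith
      rw [div_eq_div_iff h1.ne' hE.ne']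
      field_simp
      linear_combination (-(lbar*(1-lbar^2))) * hm2
    rw [← hargeq, ← h2, Real.arctan_neg]
    ring

set_option maxHeartbeats 1000000 in
lemma case_lt (L ζ lbar : ℝ) (hζ : 0 < ζ) (hζL : ζ < L) (hl0 : 0 < lbar) (hl1 : lbar < 1) :
    ∃ F : ℝ → ℝ, (∀ x, lbar ≤ x → HasDerivAt F (1 / (2*L*x + ζ*(x^2+1))) x) ∧
      F lbar⁻¹ - F lbar = (1 / (L * Real.sqrt |(ζ / L) ^ 2 - 1|)) *
        ((1/2) * Real.log ((1 + Real.sqrt |(ζ / L) ^ 2 - 1| * (1 - lbar) /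
          (2 * (lbar / (1 + lbar)) * (ζ / L - 1) + 1 + lbar)) /
          (1 - Real.sqrt |(ζ / L) ^ 2 - 1| * (1 - lbar) /
          (2 * (lbar / (1 + lbar)) * (ζ / L - 1) + 1 + lbar)))) := by
  have hL : 0 < L := lt_trans hζ hζL
  set m := Real.sqrt (L^2 - ζ^2) with hm_def
  have hm2 : m^2 = L^2 - ζ^2 := Real.sq_sqrt (by nlinarith)
  have hmpos : 0 < m := Real.sqrt_pos.mpr (by nlinarith)
  have hsq : Real.sqrt |(ζ/L)^2 - 1| = m / L := by
    have h1 : |(ζ/L)^2 - 1| = (L^2 - ζ^2) / L^2 := by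
      rw [abs_of_neg]
      · field_simp
        ring
      · have h2 : ζ / L < 1 := (div_lt_one hL).mpr hζL
        have h3 : 0 < ζ / L := div_pos hζ hL
        nlinarith
    rw [h1, Real.sqrt_div (by nlinarith) (L^2), Real.sqrt_sq hL.le]
  clear_value m
  clear hm_def
  have hmL : m < L := by nlinarith
  refine ⟨fun x => (1/(2*m)) * (Real.log (ζ*x+(L-m)) - Real.log (ζ*x+(L+m))), ?_, ?_⟩
  · intro x hx
    have hx0 : 0 < x := lt_of_lt_of_le hl0 hx
    have hD : 0 < 2*L*x + ζ*(x^2+1) := by nlinarith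
    have hA : 0 < ζ*x+(L-m) := by nlinarith
    have hB : 0 < ζ*x+(L+m) := by nlinarith
    have hi1 : HasDerivAt (fun x : ℝ => ζ*x+(L-m)) ζ x := by
      simpa using ((hasDerivAt_id x).const_mul ζ).add_const (L-m)
    have hi2 : HasDerivAt (fun x : ℝ => ζ*x+(L+m)) ζ x := by
      simpa using ((hasDerivAt_id x).const_mul ζ).add_const (L+m)
    have h2 := ((hi1.log hA.ne').sub (hi2.log hB.ne')).const_mul (1/(2*m))
    refine h2.congr_deriv (Eq.symm ?_)
    have h3 : ζ / (ζ*x+(L-m)) - ζ / (ζ*x+(L+m))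
        = 2*m*ζ / ((ζ*x+(L-m))*(ζ*x+(L+m))) := by
      rw [div_sub_div _ _ hA.ne' hB.ne']
      congr 1
      ring
    have h4 : (1/(2*m)) * (2*m*ζ / ((ζ*x+(L-m))*(ζ*x+(L+m))))
        = ζ / ((ζ*x+(L-m))*(ζ*x+(L+m))) := by
      rw [div_mul_div_comm, one_mul,
        show 2*m*ζ = (2*m)*ζ from by ring,
        mul_div_mul_left _ _ (by positivity : (0:ℝ) < 2*m).ne']
    rw [h3, h4, div_eq_div_iff hD.ne' (mul_pos hA hB).ne']
    linear_combination (-1 : ℝ) * hm2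
  · simp only
    rw [hsq]
    have h1l : (0:ℝ) < 1 + lbar := by linarith
    have hinv : (0:ℝ) < lbar⁻¹ := inv_pos.mpr hl0
    have hE : (0:ℝ) < 2*ζ*lbar + L*(1+lbar^2) := by nlinarith
    have hEP : (0:ℝ) < 2*ζ*lbar + L*(1+lbar^2) - m*(1-lbar^2) := by nlinarith
    have hEP' : (0:ℝ) < 2*ζ*lbar + L*(1+lbar^2) + m*(1-lbar^2) := by nlinarith
    have hD0eq : 2 * (lbar / (1 + lbar)) * (ζ / L - 1) + 1 + lbar
        = (2*ζ*lbar + L*(1+lbar^2))/(L*(1+lbar)) := by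
      field_simp
      ring
    have hLm : 1 / (L * (m / L)) = 1/m := by field_simp
    rw [hLm, hD0eq]
    have hy : m / L * (1 - lbar) / ((2*ζ*lbar + L*(1+lbar^2))/(L*(1+lbar)))
        = m*(1-lbar^2) / (2*ζ*lbar + L*(1+lbar^2)) := by
      rw [div_eq_div_iff (by positivity) hE.ne']
      field_simp
      ring
    rw [hy]
    have hrat : (1 + m*(1-lbar^2) / (2*ζ*lbar + L*(1+lbar^2))) /
          (1 - m*(1-lbar^2) / (2*ζ*lbar + L*(1+lbar^2)))
        = (2*ζ*lbar + L*(1+lbar^2) + m*(1-lbar^2)) /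
          (2*ζ*lbar + L*(1+lbar^2) - m*(1-lbar^2)) := by
      rw [div_eq_div_iff ?_ hEP.ne']
      · field_simp
        try ring
      · have : 0 < 1 - m*(1-lbar^2) / (2*ζ*lbar + L*(1+lbar^2)) := by
          rw [sub_pos, div_lt_one hE]
          nlinarith
        exact this.ne'
    rw [hrat]
    have hA1 : (0:ℝ) < ζ*lbar⁻¹+(L-m) := by nlinarith
    have hA2 : (0:ℝ) < ζ*lbar⁻¹+(L+m) := by nlinarith
    have hB1 : (0:ℝ) < ζ*lbar+(L-m) := by nlinarith
    have hB2 : (0:ℝ) < ζ*lbar+(L+m) := by nlinarith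
    have hcomb : Real.log (ζ*lbar⁻¹+(L-m)) - Real.log (ζ*lbar⁻¹+(L+m))
        - (Real.log (ζ*lbar+(L-m)) - Real.log (ζ*lbar+(L+m)))
        = Real.log (((ζ*lbar⁻¹+(L-m)) * (ζ*lbar+(L+m))) / ((ζ*lbar⁻¹+(L+m)) * (ζ*lbar+(L-m)))) := by
      rw [Real.log_div (by positivity) (by positivity),
        Real.log_mul hA1.ne' hB2.ne', Real.log_mul hA2.ne' hB1.ne']
      ring
    have hprod : ((ζ*lbar⁻¹+(L-m)) * (ζ*lbar+(L+m))) / ((ζ*lbar⁻¹+(L+m)) * (ζ*lbar+(L-m)))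
        = (2*ζ*lbar + L*(1+lbar^2) + m*(1-lbar^2)) /
          (2*ζ*lbar + L*(1+lbar^2) - m*(1-lbar^2)) := by
      rw [div_eq_div_iff (by positivity) hEP.ne']
      field_simp
      linear_combination (2*m*lbar*(1-lbar^2)) * hm2
    rw [← hprod, ← hcomb]
    ring
end MATIHelpers

/-- The solution of φ' = −2Lφ − ζ(φ²+1), φ(0) = λ̄⁻¹, is strictly decreasing
and stays above λ̄ on [0, T] for the MATI bound T. -/
theorem stmt8 (L ζ lbar : ℝ) (hL : 0 ≤ L) (hζ : 0 < ζ)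
    (hlbar0 : 0 < lbar) (hlbar1 : lbar < 1)
    (η : ℝ) (hη : η = Real.sqrt |(ζ / L) ^ 2 - 1|)
    (T : ℝ)
    (hT : T = if ζ > L then
        (1 / (L * η)) * Real.arctan (η * (1 - lbar) /
          (2 * (lbar / (1 + lbar)) * (ζ / L - 1) + 1 + lbar))
      else if ζ = L then (1 / L) * ((1 - lbar) / (1 + lbar))
      else (1 / (L * η)) * (fun y : ℝ => (1 / 2) * Real.log ((1 + y) / (1 - y))) (η * (1 - lbar) /
          (2 * (lbar / (1 + lbar)) * (ζ / L - 1) + 1 + lbar)))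
    (φ : ℝ → ℝ) (hφ0 : φ 0 = lbar⁻¹)
    (hode : ∀ t ∈ Set.Icc 0 T, HasDerivAt φ (-2 * L * φ t - ζ * ((φ t) ^ 2 + 1)) t) :
    StrictAntiOn φ (Set.Icc 0 T) ∧ ∀ τ ∈ Set.Icc 0 T, lbar ≤ φ τ := by
  subst hη
  have hlow : ∀ τ ∈ Set.Icc 0 T, lbar ≤ φ τ := by
    rcases eq_or_lt_of_le hL with hL0 | hLpos
    · -- L = 0 : then T = 0
      have hT0 : T = 0 := by
        rw [hT, if_pos (show ζ > L by rw [← hL0]; exact hζ), ← hL0]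
        norm_num
      intro τ hτ
      rw [hT0] at hτ
      have hτ0 : τ = 0 := le_antisymm hτ.2 hτ.1
      rw [hτ0, hφ0]
      exact le_of_lt (lt_trans hlbar1 ((one_lt_inv₀ hlbar0).mpr hlbar1))
    · rcases lt_trichotomy L ζ with hlt | heqc | hgt'
      · obtain ⟨F, hF, hFT⟩ := case_gt L ζ lbar hLpos hlt hlbar0 hlbar1
        refine mati_key L ζ lbar T hL hζ hlbar0 hlbar1 F hF ?_ φ hφ0 hode
        rw [hFT, hT, if_pos hlt]
      · subst heqc
        obtain ⟨F, hF, hFT⟩ := case_eq L lbar hLpos hlbar0 hlbar1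
        refine mati_key L L lbar T hL hζ hlbar0 hlbar1 F hF ?_ φ hφ0 hode
        rw [hFT, hT, if_neg (lt_irrefl L), if_pos rfl]
      · obtain ⟨F, hF, hFT⟩ := case_lt L ζ lbar hζ hgt' hlbar0 hlbar1
        refine mati_key L ζ lbar T hL hζ hlbar0 hlbar1 F hF ?_ φ hφ0 hode
        rw [hFT, hT, if_neg (not_lt.mpr hgt'.le), if_neg (ne_of_lt hgt')]
  refine ⟨?_, hlow⟩
  have hcont : ContinuousOn φ (Set.Icc 0 T) := fun t ht =>
    (hode t ht).continuousAt.continuousWithinAt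
  refine strictAntiOn_of_deriv_neg (convex_Icc 0 T) hcont ?_
  intro x hx
  rw [interior_Icc] at hx
  have hx' : x ∈ Set.Icc 0 T := Set.mem_Icc.mpr ⟨hx.1.le, hx.2.le⟩
  rw [(hode x hx').deriv]
  have hφx : lbar ≤ φ x := hlow x hx'
  nlinarith [mul_nonneg hL (le_of_lt (lt_of_lt_of_le hlbar0 hφx)),
    mul_pos hζ (show (0:ℝ) < (φ x)^2 + 1 by positivity)]
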